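/- Let (f_n) be a complete sequence in H whose analysis operator C, defined on D(C) = {f : ∑_n |⟨f,f_n⟩|² < ∞} by Cf = (⟨f,f_n⟩), has finite-dimensional domain. Then (f_n) is a lower semi frame for H, i.e., there exists A > 0 with A‖f‖² ≤ ∑_n |⟨f,f_n⟩|² for all f ∈ H. -/

import Mathlib

open scoped ENNReal NNReal

/-- The Bessel-type sum `∑ₙ |⟨f, gₙ⟩|²` valued in `ℝ≥0∞`. -/
noncomputable def bSum {H : Type*} [NormedAddCommGroup H] [InnerProductSpace ℂ H]
    (g : ℕ → H) (f : H) : ℝ≥0∞ :=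
  ∑' n, ((‖(inner ℂ f (g n) : ℂ)‖₊ : ℝ≥0∞)) ^ 2

theorem stmt3 {H : Type*} [NormedAddCommGroup H] [InnerProductSpace ℂ H] [CompleteSpace H]
    [TopologicalSpace.SeparableSpace H] (hinf : ¬ FiniteDimensional ℂ H)
    (F : ℕ → H)
    (hcomplete : (Submodule.span ℂ (Set.range F)).topologicalClosure = ⊤)
    (D : Submodule ℂ H) (hD : (D : Set H) = {f : H | bSum F f ≠ ⊤})
    (hfin : FiniteDimensional ℂ D) :
    ∃ A : ℝ, 0 < A ∧ ∀ f : H, ENNReal.ofReal A * (‖f‖₊ : ℝ≥0∞) ^ 2 ≤ bSum F f := by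
  classical
  -- completeness of the sequence: only 0 is orthogonal to all F n
  have horth : ∀ f : H, (∀ n, (inner ℂ f (F n) : ℂ) = 0) → f = 0 := by
    intro f hf
    have hmem : f ∈ (Submodule.span ℂ (Set.range F))ᗮ := by
      rw [Submodule.mem_orthogonal']
      intro u hu
      induction hu using Submodule.span_induction with
      | mem x hx => obtain ⟨n, rfl⟩ := hx; exact hf n
      | zero => simp
      | add x y _ _ hx hy => rw [inner_add_right, hx, hy, add_zero]
      | smul c x _ hx => rw [inner_smul_right, hx, mul_zero]
    rw [Submodule.topologicalClosure_eq_top_iff] at hcomplete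
    rw [hcomplete] at hmem
    simpa using hmem
  have hmemD : ∀ f : H, f ∈ D ↔ bSum F f ≠ ⊤ := fun f => by
    have := Set.ext_iff.mp hD f
    simpa using this
  -- summability for elements of D
  have hsum : ∀ f : H, bSum F f ≠ ⊤ →
      Summable (fun n => ‖(inner ℂ f (F n) : ℂ)‖ ^ (2 : ℝ)) := by
    intro f hf
    have h1 : Summable (fun n => (‖(inner ℂ f (F n) : ℂ)‖₊) ^ 2 : ℕ → ℝ≥0) := by
      rw [← ENNReal.tsum_coe_ne_top_iff_summable]
      convert hf using 2 with n
      simp [bSum, ENNReal.coe_pow]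
    have h2 := NNReal.summable_coe.mpr h1
    convert h2 using 2 with n
    push_cast
    rw [Real.rpow_two]
  haveI : FiniteDimensional ℝ D := FiniteDimensional.trans ℝ ℂ D
  -- the analysis operator as a real-linear map into ℓ²
  have hmem2 : ∀ x : D, Memℓp (fun n => (inner ℂ (x : H) (F n) : ℂ)) 2 := by
    intro x
    apply memℓp_gen
    have := hsum x ((hmemD x).1 x.2)
    simpa using this
  let T : D →ₗ[ℝ] lp (fun _ : ℕ => ℂ) 2 :=
    { toFun := fun x => ⟨fun n => (inner ℂ (x : H) (F n) : ℂ), hmem2 x⟩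
      map_add' := by
        intro x y
        apply Subtype.ext
        funext n
        simp only [Submodule.coe_add, inner_add_left]
        rfl
      map_smul' := by
        intro r x
        apply Subtype.ext
        funext n
        have : ((r • x : D) : H) = (r : ℂ) • (x : H) := by
          simp [Complex.coe_smul]
        simp only [this, inner_smul_left, Complex.conj_ofReal, RingHom.id_apply]
        simp [Complex.real_smul] }
  have hinj : LinearMap.ker T = ⊥ := by
    rw [LinearMap.ker_eq_bot']
    intro x hx
    have h0 : ∀ n, (inner ℂ (x : H) (F n) : ℂ) = 0 := by
      intro n
      have := congrFun (congrArg Subtype.val hx) n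
      simpa [T] using this
    have : (x : H) = 0 := horth _ h0
    exact Subtype.ext this
  obtain ⟨K, hK0, hK⟩ := T.exists_antilipschitzWith hinj
  refine ⟨((K : ℝ) ^ 2)⁻¹, by positivity, ?_⟩
  intro f
  by_cases hf : bSum F f = ⊤
  · rw [hf]; exact le_top
  · have hfD : f ∈ D := (hmemD f).2 hf
    set x : D := ⟨f, hfD⟩
    have hnorm : ‖f‖ ≤ K * ‖T x‖ := by
      have := hK.le_mul_dist x 0
      simpa [dist_eq_norm, Submodule.coe_norm] using this
    set S : ℝ := ∑' n, ‖(inner ℂ f (F n) : ℂ)‖ ^ (2 : ℝ) with hS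
    have hSnn : 0 ≤ S := tsum_nonneg fun n => by positivity
    have hTx2 : ‖T x‖ ^ 2 = S := by
      have h := lp.norm_rpow_eq_tsum (p := 2) (by norm_num) (T x)
      rw [hS]
      simpa [Real.rpow_two, T] using h
    have hreal : ((K : ℝ) ^ 2)⁻¹ * ‖f‖ ^ 2 ≤ S := by
      have h1 : ‖f‖ ^ 2 ≤ (K : ℝ) ^ 2 * ‖T x‖ ^ 2 := by
        calc ‖f‖ ^ 2 ≤ ((K : ℝ) * ‖T x‖) ^ 2 := by
              apply pow_le_pow_left₀ (norm_nonneg _) hnorm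
          _ = (K : ℝ) ^ 2 * ‖T x‖ ^ 2 := by ring
      rw [hTx2] at h1
      have hKpos : (0 : ℝ) < (K : ℝ) ^ 2 := by positivity
      rw [inv_mul_le_iff₀ hKpos]
      linarith [h1]
    have hbS : bSum F f = ENNReal.ofReal S := by
      rw [hS, ENNReal.ofReal_tsum_of_nonneg (fun n => by positivity) (hsum f hf)]
      unfold bSum
      congr 1
      funext n
      rw [Real.rpow_two, ENNReal.ofReal_pow (norm_nonneg _), ← coe_nnnorm, ENNReal.ofReal_coe_nnreal]
    rw [hbS]
    calc ENNReal.ofReal ((K : ℝ) ^ 2)⁻¹ * (‖f‖₊ : ℝ≥0∞) ^ 2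
        = ENNReal.ofReal (((K : ℝ) ^ 2)⁻¹ * ‖f‖ ^ 2) := by
          rw [ENNReal.ofReal_mul (by positivity), ENNReal.ofReal_pow (norm_nonneg _),
            ← coe_nnnorm, ENNReal.ofReal_coe_nnreal]
      _ ≤ ENNReal.ofReal S := ENNReal.ofReal_le_ofReal hreal
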